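/- Let d be an integer with d \geq 2. For a monic polynomial f of degree d over a finite field F_q, define the quadratic excess Q(f) = binomial(m_1(f), 2) - m_2(f), where m_1(f) is the number of monic linear factors of f counted with multiplicity and m_2(f) is the number of monic irreducible quadratic factors of f counted with multiplicity. Then there exists a polynomial p in Z[X] with nonnegative integer coefficients, with p(0) = 0 and degree at most d, such that for every finite field F_q, \sum_{f} Q(f) = p(q) where the sum runs over all monic polynomials of degree d in F_q[x], and moreover p(1) = binomial(d, 2). -/

import Mathlib

open Polynomial

/-- `m_j(f)`: the number of irreducible factors of `f` of degree `j`, counted with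
multiplicity. -/
noncomputable def factorCount {F : Type*} [Field F] (j : ℕ) (f : F[X]) : ℕ :=
  Multiset.count j ((UniqueFactorizationMonoid.factors f).map natDegree)

/-- The quadratic excess `Q(f) = binomial(m₁(f), 2) - m₂(f)`. -/
noncomputable def quadExcess {F : Type*} [Field F] (f : F[X]) : ℤ :=
  ((factorCount 1 f).choose 2 : ℤ) - (factorCount 2 f : ℤ)

open Finset UniqueFactorizationMonoid
open scoped Classical

namespace QEaux

/-- diagonal double sum -/
def Dz (d : ℕ) (q : ℤ) : ℤ := ∑ i ∈ Icc 1 d, ∑ j ∈ Icc 1 d, q ^ (d - max i j)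
def Oz (d : ℕ) (q : ℤ) : ℤ :=
  ∑ i ∈ Icc 1 d, ∑ j ∈ Icc 1 d, if i + j ≤ d then q ^ (d - (i + j)) else 0
def E1z (d : ℕ) (q : ℤ) : ℤ := ∑ i ∈ Icc 1 d, q ^ (d - i)
def Bz (d : ℕ) (q : ℤ) : ℤ := ∑ i ∈ Icc 1 d, if 2 * i ≤ d then q ^ (d - 2 * i) else 0

noncomputable def pAux : ℕ → Polynomial ℤ
  | 0 => X
  | n + 1 => X * pAux n + C (((n + 3) / 2 : ℕ) : ℤ) * X + C (((n + 2) / 2 : ℕ) : ℤ) * X ^ 2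

lemma E1z_rec (d : ℕ) (hd : 1 ≤ d) (q : ℤ) : E1z (d + 1) q = q * E1z d q + 1 := by
  rw [E1z, E1z, Finset.sum_Icc_succ_top (by omega : 1 ≤ _ + 1), Finset.mul_sum]
  congr 1
  · apply Finset.sum_congr rfl
    intro i hi
    simp only [Finset.mem_Icc] at hi
    rw [show d + 1 - i = (d - i) + 1 by omega, pow_succ]
    ring
  · simp

lemma Bz_rec (d : ℕ) (hd : 1 ≤ d) (q : ℤ) :
    Bz (d + 1) q = q * Bz d q + (if (d + 1) % 2 = 0 then 1 else 0) := by
  rw [Bz, Bz, Finset.sum_Icc_succ_top (by omega : 1 ≤ _ + 1), Finset.mul_sum]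
  rw [if_neg (by omega)]
  have : ∀ i ∈ Icc 1 d, (if 2 * i ≤ d + 1 then q ^ (d + 1 - 2 * i) else 0)
      = q * (if 2 * i ≤ d then q ^ (d - 2 * i) else 0) + (if 2 * i = d + 1 then 1 else 0) := by
    intro i hi
    simp only [Finset.mem_Icc] at hi
    by_cases h1 : 2 * i ≤ d
    · rw [if_pos (by omega), if_pos h1, if_neg (by omega),
        show d + 1 - 2 * i = (d - 2 * i) + 1 by omega, pow_succ]
      ring
    · by_cases h2 : 2 * i = d + 1
      · rw [if_pos (by omega), if_neg h1, if_pos h2]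
        simp [h2]
      · rw [if_neg (by omega), if_neg h1, if_neg h2]
        ring
  rw [Finset.sum_congr rfl this, Finset.sum_add_distrib]
  have : (∑ i ∈ Icc 1 d, if 2 * i = d + 1 then (1 : ℤ) else 0)
      = (if (d + 1) % 2 = 0 then 1 else 0) := by
    by_cases h : (d + 1) % 2 = 0
    · rw [if_pos h]
      rw [Finset.sum_congr rfl (g := fun i => if i = (d + 1) / 2 then (1:ℤ) else 0)
        (fun i _ => by congr 1; simp only [eq_iff_iff]; omega)]
      rw [Finset.sum_ite_eq' (Icc 1 d) ((d+1)/2) (fun _ => (1:ℤ)), if_pos (by simp; omega)]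
    · rw [if_neg h]
      apply Finset.sum_eq_zero
      intro i hi
      rw [if_neg (by omega)]
  rw [this, add_right_comm]
  ring

lemma Dz_rec (d : ℕ) (hd : 1 ≤ d) (q : ℤ) :
    Dz (d + 1) q = q * Dz d q + (2 * d + 1) := by
  rw [Dz, Dz, Finset.sum_Icc_succ_top (by omega : 1 ≤ _ + 1)]
  have htop : (∑ j ∈ Icc 1 (d+1), q ^ (d + 1 - max (d+1) j)) = d + 1 := by
    rw [Finset.sum_congr rfl (g := fun _ => (1:ℤ))
      (fun j hj => by simp only [Finset.mem_Icc] at hj; rw [show d + 1 - max (d+1) j = 0 by omega, pow_zero])]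
    simp [Nat.card_Icc]
  rw [htop]
  have hrow : ∀ i ∈ Icc 1 d, (∑ j ∈ Icc 1 (d+1), q ^ (d + 1 - max i j))
      = q * (∑ j ∈ Icc 1 d, q ^ (d - max i j)) + 1 := by
    intro i hi
    simp only [Finset.mem_Icc] at hi
    rw [Finset.sum_Icc_succ_top (by omega : 1 ≤ _ + 1), Finset.mul_sum]
    congr 1
    · apply Finset.sum_congr rfl
      intro j hj
      simp only [Finset.mem_Icc] at hj
      rw [show d + 1 - max i j = (d - max i j) + 1 by omega, pow_succ]
      ring
    · rw [show d + 1 - max i (d+1) = 0 by omega, pow_zero]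
  rw [Finset.sum_congr rfl hrow, Finset.sum_add_distrib, ← Finset.mul_sum]
  simp [Nat.card_Icc]
  ring

lemma Oz_rec (d : ℕ) (hd : 1 ≤ d) (q : ℤ) :
    Oz (d + 1) q = q * Oz d q + d := by
  rw [Oz, Oz, Finset.sum_Icc_succ_top (by omega : 1 ≤ _ + 1)]
  have htop : (∑ j ∈ Icc 1 (d+1), if d + 1 + j ≤ d + 1 then q ^ (d + 1 - (d+1+j)) else 0) = 0 := by
    apply Finset.sum_eq_zero
    intro j hj
    simp only [Finset.mem_Icc] at hj
    rw [if_neg (by omega)]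
  rw [htop, add_zero]
  have hrow : ∀ i ∈ Icc 1 d,
      (∑ j ∈ Icc 1 (d+1), if i + j ≤ d + 1 then q ^ (d + 1 - (i + j)) else 0)
      = q * (∑ j ∈ Icc 1 d, if i + j ≤ d then q ^ (d - (i + j)) else 0)
        + (if i + 1 ≤ d + 1 ∧ d + 1 - i ≤ d ∧ 1 ≤ d + 1 - i then 1 else 0) := by
    intro i hi
    simp only [Finset.mem_Icc] at hi
    rw [Finset.sum_Icc_succ_top (by omega : 1 ≤ _ + 1), if_neg (by omega), add_zero,
      Finset.mul_sum]
    have : ∀ j ∈ Icc 1 d, (if i + j ≤ d + 1 then q ^ (d + 1 - (i + j)) else 0)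
        = q * (if i + j ≤ d then q ^ (d - (i + j)) else 0) + (if j = d + 1 - i then 1 else 0) := by
      intro j hj
      simp only [Finset.mem_Icc] at hj
      by_cases h1 : i + j ≤ d
      · rw [if_pos (by omega), if_pos h1, if_neg (by omega),
          show d + 1 - (i + j) = (d - (i + j)) + 1 by omega, pow_succ]
        ring
      · by_cases h2 : j = d + 1 - i
        · rw [if_pos (by omega), if_neg h1, if_pos h2, show d + 1 - (i + j) = 0 by omega, pow_zero]
          ring
        · rw [if_neg (by omega), if_neg h1, if_neg h2]
          ring
    rw [Finset.sum_congr rfl this, Finset.sum_add_distrib,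
      Finset.sum_ite_eq' (Icc 1 d) (d + 1 - i) (fun _ => (1:ℤ))]
    congr 1
    simp only [Finset.mem_Icc]
    by_cases h : d + 1 - i ≤ d ∧ 1 ≤ d + 1 - i
    · rw [if_pos (by omega : 1 ≤ d + 1 - i ∧ d + 1 - i ≤ d), if_pos (by omega)]
    · rw [if_neg (by omega), if_neg (by omega)]
  rw [Finset.sum_congr rfl hrow, Finset.sum_add_distrib, ← Finset.mul_sum]
  congr 1
  have : ∀ i ∈ Icc 1 d, (if i + 1 ≤ d + 1 ∧ d + 1 - i ≤ d ∧ 1 ≤ d + 1 - i then (1:ℤ) else 0) = 1 := by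
    intro i hi
    simp only [Finset.mem_Icc] at hi
    rw [if_pos (by omega)]
  rw [Finset.sum_congr rfl this]
  simp [Nat.card_Icc]

lemma pAux_alg (n : ℕ) (q : ℤ) :
    2 * (pAux n).eval q
      = q * Dz (n + 2) q + (q ^ 2 - q) * Oz (n + 2) q - q * E1z (n + 2) q
        - (q ^ 2 - q) * Bz (n + 2) q := by
  induction n with
  | zero =>
      have h2 : (Icc 1 2 : Finset ℕ) = {1, 2} := rfl
      simp only [pAux, Dz, Oz, E1z, Bz, h2]
      norm_num [Finset.sum_insert, Finset.sum_singleton]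
      ring
  | succ n ih =>
      have h1 : 1 ≤ n + 2 := by omega
      rw [show n + 1 + 2 = (n + 2) + 1 by omega, Dz_rec _ h1, Oz_rec _ h1, E1z_rec _ h1,
        Bz_rec _ h1]
      simp only [pAux, eval_add, eval_mul, eval_X, eval_pow, eval_C]
      rcases Nat.even_or_odd n with ⟨k, rfl⟩ | ⟨k, rfl⟩
      · have e1 : ((k + k + 3) / 2 : ℕ) = k + 1 := by omega
        have e2 : ((k + k + 2) / 2 : ℕ) = k + 1 := by omega
        rw [e1, e2, if_neg (by omega)]
        push_cast
        linear_combination q * ih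
      · have e1 : ((2 * k + 1 + 3) / 2 : ℕ) = k + 2 := by omega
        have e2 : ((2 * k + 1 + 2) / 2 : ℕ) = k + 1 := by omega
        rw [e1, e2, if_pos (by omega)]
        push_cast
        linear_combination q * ih


lemma pAux_coeff_nonneg (n : ℕ) : ∀ i, 0 ≤ (pAux n).coeff i := by
  induction n with
  | zero => intro i; simp only [pAux, coeff_X]; split <;> norm_num
  | succ n ih =>
      intro i
      simp only [pAux, coeff_add]
      have h1 : 0 ≤ (X * pAux n).coeff i := by
        cases i with
        | zero => simp
        | succ k => rw [coeff_X_mul]; exact ih k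
      have h2 : 0 ≤ (C (((n + 3) / 2 : ℕ) : ℤ) * X).coeff i := by
        rw [coeff_C_mul, coeff_X]
        split <;> positivity
      have h3 : 0 ≤ (C (((n + 2) / 2 : ℕ) : ℤ) * X ^ 2).coeff i := by
        rw [coeff_C_mul, coeff_X_pow]
        split <;> positivity
      positivity
  
lemma pAux_eval_zero (n : ℕ) : (pAux n).eval 0 = 0 := by
  induction n with
  | zero => simp [pAux]
  | succ n ih => simp [pAux, ih]

lemma pAux_natDegree (n : ℕ) : (pAux n).natDegree ≤ n + 2 := by
  induction n with
  | zero => simp [pAux]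
  | succ n ih =>
      simp only [pAux]
      apply le_trans (natDegree_add_le _ _)
      apply max_le
      apply le_trans (natDegree_add_le _ _)
      apply max_le
      · apply le_trans (natDegree_mul_le)
        simp only [natDegree_X]
        omega
      · apply le_trans (natDegree_mul_le)
        simp only [natDegree_X, natDegree_C]
        omega
      · apply le_trans (natDegree_mul_le)
        simp only [natDegree_C, natDegree_pow, natDegree_X]
        omega

lemma pAux_eval_one (n : ℕ) : (pAux n).eval 1 = ((n + 2).choose 2 : ℤ) := by
  induction n with
  | zero => simp [pAux]
  | succ n ih =>
      simp only [pAux, eval_add, eval_mul, eval_X, eval_pow, eval_C, one_pow, mul_one, one_mul, ih]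
      have h1 : (n + 1 + 2).choose 2 = (n + 2).choose 2 + ((n + 3) / 2) + ((n + 2) / 2) := by
        rw [show n + 1 + 2 = (n + 2) + 1 from rfl, Nat.choose_succ_succ, Nat.choose_one_right]
        simp only [Nat.succ_eq_add_one]
        norm_num
        omega
      rw [h1]
      push_cast
      ring


variable {F : Type} [Field F] [Fintype F]

/-- The monic polynomial with prescribed lower coefficients. -/
noncomputable def monicMap (F : Type) [Field F] (n : ℕ) (v : Fin n → F) : F[X] :=
  X ^ n + ∑ i : Fin n, C (v i) * X ^ (i : ℕ)

lemma monicMap_coeff {n : ℕ} (v : Fin n → F) (k : ℕ) :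
    (monicMap F n v).coeff k
      = (if k = n then 1 else 0) + (if h : k < n then v ⟨k, h⟩ else 0) := by
  rw [monicMap, coeff_add, coeff_X_pow, finset_sum_coeff]
  congr 1
  simp only [coeff_C_mul, coeff_X_pow, mul_ite, mul_one, mul_zero]
  by_cases h : k < n
  · rw [dif_pos h]
    rw [Finset.sum_congr rfl (g := fun i => if i = (⟨k, h⟩ : Fin n) then v i else 0)
      (fun i _ => by
        show _ = if i = (⟨k, h⟩ : Fin n) then v i else 0
        by_cases hik : i = (⟨k, h⟩ : Fin n)
        · rw [if_pos hik, if_pos (by subst hik; rfl)]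
        · rw [if_neg hik, if_neg (fun hk : k = (i : ℕ) => hik (Fin.ext hk.symm))])]
    rw [Finset.sum_ite_eq' Finset.univ (⟨k, h⟩ : Fin n) (fun i => v i),
      if_pos (Finset.mem_univ _)]
  · rw [dif_neg h]
    apply Finset.sum_eq_zero
    intro i _
    rw [if_neg (fun hk : k = (i : ℕ) => h (hk ▸ i.isLt))]

lemma monicMap_monic {n : ℕ} (v : Fin n → F) : (monicMap F n v).Monic :=
  monic_X_pow_add (degree_sum_fin_lt v)

lemma monicMap_natDegree {n : ℕ} (v : Fin n → F) : (monicMap F n v).natDegree = n := by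
  apply natDegree_eq_of_degree_eq_some
  rw [monicMap, degree_add_eq_left_of_degree_lt, degree_X_pow]
  rw [degree_X_pow]
  exact degree_sum_fin_lt v

lemma monicMap_injective {n : ℕ} : Function.Injective (monicMap F n) := by
  intro v w h
  funext i
  have h1 := monicMap_coeff v (i : ℕ)
  have h2 := monicMap_coeff w (i : ℕ)
  rw [h] at h1
  rw [h1] at h2
  have hi : (i : ℕ) < n := i.isLt
  rw [dif_pos hi, dif_pos hi] at h2
  simpa using h2

/-- The finset of monic polynomials of degree `n`. -/
noncomputable def monicFinset (F : Type) [Field F] [Fintype F] (n : ℕ) : Finset F[X] :=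
  Finset.univ.map ⟨monicMap F n, monicMap_injective⟩

lemma mem_monicFinset {n : ℕ} {f : F[X]} :
    f ∈ monicFinset F n ↔ f.Monic ∧ f.natDegree = n := by
  simp only [monicFinset, Finset.mem_map, Finset.mem_univ, true_and,
    Function.Embedding.coeFn_mk]
  constructor
  · rintro ⟨v, rfl⟩
    exact ⟨monicMap_monic v, monicMap_natDegree v⟩
  · rintro ⟨hm, hdeg⟩
    refine ⟨fun i => f.coeff (i : ℕ), ?_⟩
    ext k
    rw [monicMap_coeff]
    rcases lt_trichotomy k n with h | h | h
    · rw [dif_pos h, if_neg (by omega)]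
      simp
    · subst h
      rw [dif_neg (by omega), if_pos rfl, add_zero]
      exact (hdeg ▸ hm.coeff_natDegree).symm
    · rw [dif_neg (by omega), if_neg (by omega), add_zero]
      exact (coeff_eq_zero_of_natDegree_lt (hdeg ▸ h)).symm

lemma card_monicFinset (n : ℕ) : (monicFinset F n).card = Fintype.card F ^ n := by
  rw [monicFinset, Finset.card_map, Finset.card_univ, Fintype.card_fun, Fintype.card_fin]


lemma card_dvd_filter (d : ℕ) {h : F[X]} (hh : h.Monic) (hle : h.natDegree ≤ d) :
    ((monicFinset F d).filter (fun f => h ∣ f)).card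
      = Fintype.card F ^ (d - h.natDegree) := by
  rw [← card_monicFinset (F := F) (d - h.natDegree)]
  symm
  apply Finset.card_bij (fun g _ => g * h)
  · intro g hg
    rw [mem_monicFinset] at hg
    rw [Finset.mem_filter, mem_monicFinset]
    refine ⟨⟨hg.1.mul hh, ?_⟩, dvd_mul_left h g⟩
    rw [hg.1.natDegree_mul hh, hg.2]
    omega
  · intro g1 hg1 g2 hg2 hgh
    exact mul_right_cancel₀ hh.ne_zero hgh
  · intro f hf
    rw [Finset.mem_filter, mem_monicFinset] at hf
    obtain ⟨⟨hfm, hfd⟩, c, rfl⟩ := hf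
    have hcm : c.Monic := hh.of_mul_monic_left hfm
    refine ⟨c, ?_, (mul_comm c h)⟩
    rw [mem_monicFinset]
    refine ⟨hcm, ?_⟩
    rw [hh.natDegree_mul hcm] at hfd
    omega

lemma sum_ind_dvd (d : ℕ) {h : F[X]} (hh : h.Monic) :
    (∑ f ∈ monicFinset F d, if h ∣ f then (1 : ℤ) else 0)
      = if h.natDegree ≤ d then (Fintype.card F : ℤ) ^ (d - h.natDegree) else 0 := by
  rw [Finset.sum_boole]
  by_cases hle : h.natDegree ≤ d
  · rw [if_pos hle, card_dvd_filter d hh hle]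
    push_cast
    rfl
  · rw [if_neg hle]
    have : (monicFinset F d).filter (fun f => h ∣ f) = ∅ := by
      apply Finset.filter_false_of_mem
      intro f hf hdvd
      rw [mem_monicFinset] at hf
      exact hle (hf.2 ▸ Polynomial.natDegree_le_of_dvd hdvd hf.1.ne_zero)
    rw [this]
    simp

lemma pow_dvd_iff_le_cnt {g f : F[X]} (hg : Irreducible g) (hgm : g.Monic) (hf : f ≠ 0)
    {i : ℕ} : g ^ i ∣ f ↔ i ≤ (normalizedFactors f).count g := by
  rw [pow_dvd_iff_le_emultiplicity, emultiplicity_eq_count_normalizedFactors hg hf,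
    hgm.normalize_eq_self, Nat.cast_le]

lemma cnt_eq_sum_ind {d : ℕ} {g f : F[X]} (hg : Irreducible g) (hgm : g.Monic)
    (hf : f ∈ monicFinset F d) :
    (((normalizedFactors f).count g : ℤ))
      = ∑ i ∈ Finset.Icc 1 d, (if g ^ i ∣ f then (1 : ℤ) else 0) := by
  rw [mem_monicFinset] at hf
  have hf0 : f ≠ 0 := hf.1.ne_zero
  set c := (normalizedFactors f).count g with hc
  have hcd : c ≤ d := by
    have hdvd : g ^ c ∣ f := (pow_dvd_iff_le_cnt hg hgm hf0).2 le_rfl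
    have h1 : (g ^ c).natDegree ≤ f.natDegree := Polynomial.natDegree_le_of_dvd hdvd hf0
    rw [Polynomial.natDegree_pow, hf.2] at h1
    have h2 : 1 ≤ g.natDegree := hg.natDegree_pos
    nlinarith
  have : ∀ i ∈ Finset.Icc 1 d, (if g ^ i ∣ f then (1 : ℤ) else 0)
      = (if i ≤ c then (1 : ℤ) else 0) := by
    intro i _
    congr 1
    simp only [eq_iff_iff]
    exact pow_dvd_iff_le_cnt hg hgm hf0
  rw [Finset.sum_congr rfl this, Finset.sum_boole]
  have : (Finset.Icc 1 d).filter (fun i => i ≤ c) = Finset.Icc 1 c := by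
    ext i
    simp only [Finset.mem_filter, Finset.mem_Icc]
    omega
  rw [this, Nat.card_Icc]
  simp



lemma factorCount_eq_filter (j : ℕ) (f : F[X]) :
    factorCount j f
      = Multiset.card ((normalizedFactors f).filter (fun g => g.natDegree = j)) := by
  have h1 : (normalizedFactors f).map natDegree = (factors f).map natDegree := by
    rw [normalizedFactors, Multiset.map_map]
    apply Multiset.map_congr rfl
    intro g _
    exact natDegree_eq_of_degree_eq (degree_normalize)
  rw [factorCount, ← h1, Multiset.count_map]
  congr 1
  apply Multiset.filter_congr
  intro g _
  exact eq_comm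

lemma monic_of_mem_normalizedFactors {f g : F[X]} (hg : g ∈ normalizedFactors f) : g.Monic := by
  have h1 := normalize_normalized_factor g hg
  have h2 := irreducible_of_normalized_factor g hg
  rw [← h1]
  exact monic_normalize h2.ne_zero

lemma filter_card_eq_sum (s : Multiset F[X]) (T : Finset F[X]) (j : ℕ)
    (hT : ∀ g ∈ T, g.natDegree = j) (hs : ∀ x ∈ s, x.natDegree = j → x ∈ T) :
    Multiset.card (s.filter (fun g => g.natDegree = j)) = ∑ g ∈ T, s.count g := by
  induction s using Multiset.induction_on with
  | empty => simp
  | cons a s ih =>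
      rw [Multiset.filter_cons]
      have hss : ∀ x ∈ s, x.natDegree = j → x ∈ T := fun x hx => hs x (Multiset.mem_cons_of_mem hx)
      have hsum : ∑ g ∈ T, (a ::ₘ s).count g = (∑ g ∈ T, s.count g) + (if a ∈ T then 1 else 0) := by
        rw [Finset.sum_congr rfl (g := fun g => s.count g + if g = a then 1 else 0)
          (fun g _ => Multiset.count_cons g a s), Finset.sum_add_distrib]
        congr 1
        rw [Finset.sum_ite_eq' T a (fun _ => 1)]
      rw [hsum, ← ih hss]
      by_cases hP : a.natDegree = j
      · rw [if_pos hP, if_pos (hs a (Multiset.mem_cons_self a s) hP)]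
        simp [add_comm]
      · rw [if_neg hP, if_neg (fun haT => hP (hT a haT))]
        simp

/-- the finset of monic irreducible quadratics -/
noncomputable def irred2 (F : Type) [Field F] [Fintype F] : Finset F[X] :=
  (monicFinset F 2).filter Irreducible

lemma factorCount_one (f : F[X]) (hf : f ≠ 0) :
    factorCount 1 f = ∑ a : F, (normalizedFactors f).count (X - C a) := by
  rw [factorCount_eq_filter, filter_card_eq_sum _ (Finset.image (fun a : F => X - C a) Finset.univ)]
  · rw [Finset.sum_image]
    intro a _ b _ hab
    have := sub_right_injective hab
    exact C_injective this
  · intro g hg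
    obtain ⟨a, _, rfl⟩ := Finset.mem_image.1 hg
    exact natDegree_X_sub_C a
  · intro x hx hdeg
    have hm : x.Monic := monic_of_mem_normalizedFactors hx
    have h1 : x = C (x.coeff 1) * X + C (x.coeff 0) := eq_X_add_C_of_natDegree_le_one (by omega)
    have h2 : x.coeff 1 = 1 := by
      have := hm.coeff_natDegree
      rwa [hdeg] at this
    rw [Finset.mem_image]
    refine ⟨-(x.coeff 0), Finset.mem_univ _, ?_⟩
    rw [h2, C_1, one_mul] at h1
    rw [map_neg, sub_neg_eq_add]
    exact h1.symm

lemma factorCount_two (f : F[X]) (hf : f ≠ 0) :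
    factorCount 2 f = ∑ g ∈ irred2 F, (normalizedFactors f).count g := by
  rw [factorCount_eq_filter, filter_card_eq_sum _ (irred2 F)]
  · intro g hg
    rw [irred2, Finset.mem_filter, mem_monicFinset] at hg
    exact hg.1.2
  · intro x hx hdeg
    rw [irred2, Finset.mem_filter, mem_monicFinset]
    exact ⟨⟨monic_of_mem_normalizedFactors hx, hdeg⟩, irreducible_of_normalized_factor x hx⟩

noncomputable def sym2map (F : Type) [Field F] : Sym2 F → F[X] :=
  Sym2.lift ⟨fun a b => (X - C a) * (X - C b), fun a b => mul_comm _ _⟩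

lemma sym2map_injective : Function.Injective (sym2map F) := by
  intro z w
  induction z using Sym2.ind with
  | _ a b =>
  induction w using Sym2.ind with
  | _ c d =>
  intro h
  simp only [sym2map, Sym2.lift_mk] at h
  have heva : ((a : F) - c) * (a - d) = 0 := by
    have := congrArg (Polynomial.eval a) h
    simp only [eval_mul, eval_sub, eval_X, eval_C, sub_self, zero_mul] at this
    exact this.symm
  rw [Sym2.eq_iff]
  rcases mul_eq_zero.1 heva with h1 | h1
  · have hac : a = c := sub_eq_zero.1 h1
    subst hac
    have : X - C b = X - C d := mul_left_cancel₀ (X_sub_C_ne_zero a) h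
    have : b = d := C_injective (sub_right_injective this)
    tauto
  · have had : a = d := sub_eq_zero.1 h1
    subst had
    rw [mul_comm (X - C c) (X - C a)] at h
    have : X - C b = X - C c := mul_left_cancel₀ (X_sub_C_ne_zero a) h
    have : b = c := C_injective (sub_right_injective this)
    tauto

lemma image_sym2map :
    Finset.univ.image (sym2map F) = (monicFinset F 2).filter (fun f => ¬ Irreducible f) := by
  ext f
  simp only [Finset.mem_image, Finset.mem_univ, true_and, Finset.mem_filter, mem_monicFinset]
  constructor
  · rintro ⟨z, rfl⟩
    induction z using Sym2.ind with
    | _ a b =>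
    simp only [sym2map, Sym2.lift_mk]
    have hm : ((X - C a) * (X - C b)).Monic := (monic_X_sub_C a).mul (monic_X_sub_C b)
    have hd : ((X - C a) * (X - C b)).natDegree = 2 := by
      rw [(monic_X_sub_C a).natDegree_mul (monic_X_sub_C b), natDegree_X_sub_C, natDegree_X_sub_C]
    refine ⟨⟨hm, hd⟩, fun hirr => ?_⟩
    rcases hirr.isUnit_or_isUnit (rfl : (X - C a) * (X - C b) = (X - C a) * (X - C b)) with hu | hu <;>
      exact not_isUnit_of_natDegree_pos _ (by rw [natDegree_X_sub_C]; omega) hu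
  · rintro ⟨⟨hm, hd⟩, hni⟩
    have hnu : ¬ IsUnit f := not_isUnit_of_natDegree_pos _ (by omega)
    rw [irreducible_iff] at hni
    push_neg at hni
    obtain ⟨a, b, rfl, hna, hnb⟩ := hni hnu
    have ha0 : a ≠ 0 := fun h => by simp [h] at hm
    have hb0 : b ≠ 0 := fun h => by simp [h] at hm
    have hdeg : a.natDegree + b.natDegree = 2 := by
      rw [← natDegree_mul ha0 hb0, hd]
    have hda : a.natDegree = 1 := by
      have h1 : 0 < a.natDegree := by
        rcases Nat.eq_zero_or_pos a.natDegree with h | h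
        · exfalso
          apply hna
          rw [Polynomial.eq_C_of_natDegree_eq_zero h]
          exact isUnit_C.2 (isUnit_iff_ne_zero.2 (by
            intro hc
            apply ha0
            rw [Polynomial.eq_C_of_natDegree_eq_zero h, hc, C_0]))
        · exact h
      have h2 : 0 < b.natDegree := by
        rcases Nat.eq_zero_or_pos b.natDegree with h | h
        · exfalso
          apply hnb
          rw [Polynomial.eq_C_of_natDegree_eq_zero h]
          exact isUnit_C.2 (isUnit_iff_ne_zero.2 (by
            intro hc
            apply hb0
            rw [Polynomial.eq_C_of_natDegree_eq_zero h, hc, C_0]))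
        · exact h
      omega
    have hdb : b.natDegree = 1 := by omega
    set u := a.leadingCoeff with hu
    have hu0 : u ≠ 0 := leadingCoeff_ne_zero.2 ha0
    have hlc : a.leadingCoeff * b.leadingCoeff = 1 := by
      rw [← leadingCoeff_mul]; exact hm
    -- monic rescalings
    set a' := C u⁻¹ * a with ha'
    set b' := C u * b with hb'
    have hab' : a' * b' = a * b := by
      rw [ha', hb', show C u⁻¹ * a * (C u * b) = C u⁻¹ * C u * (a * b) from by ring,
        ← C_mul, inv_mul_cancel₀ hu0, C_1, one_mul]
    have hma' : a'.Monic := by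
      rw [Monic, ha', leadingCoeff_mul, leadingCoeff_C]
      field_simp
      exact hu.symm
    have hmb' : b'.Monic := by
      rw [Monic, hb', leadingCoeff_mul, leadingCoeff_C]
      exact hlc
    have hda' : a'.natDegree = 1 := by
      rw [ha', natDegree_C_mul (inv_ne_zero hu0), hda]
    have hdb' : b'.natDegree = 1 := by
      rw [hb', natDegree_C_mul hu0, hdb]
    have hae : a' = X + C (a'.coeff 0) := by
      have h1 : a' = C (a'.coeff 1) * X + C (a'.coeff 0) :=
        eq_X_add_C_of_natDegree_le_one (by omega)
      have h2 : a'.coeff 1 = 1 := by have := hma'.coeff_natDegree; rwa [hda'] at this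
      rw [h2, C_1, one_mul] at h1
      exact h1
    have hbe : b' = X + C (b'.coeff 0) := by
      have h1 : b' = C (b'.coeff 1) * X + C (b'.coeff 0) :=
        eq_X_add_C_of_natDegree_le_one (by omega)
      have h2 : b'.coeff 1 = 1 := by have := hmb'.coeff_natDegree; rwa [hdb'] at this
      rw [h2, C_1, one_mul] at h1
      exact h1
    refine ⟨s(-(a'.coeff 0), -(b'.coeff 0)), ?_⟩
    simp only [sym2map, Sym2.lift_mk]
    rw [map_neg, map_neg, sub_neg_eq_add, sub_neg_eq_add, ← hae, ← hbe, hab']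

lemma two_mul_card_irred2 :
    2 * (irred2 F).card + Fintype.card F = Fintype.card F ^ 2 := by
  have hsplit := Finset.card_filter_add_card_filter_not
    (s := monicFinset F 2) (p := Irreducible)
  rw [card_monicFinset] at hsplit
  have hred : ((monicFinset F 2).filter (fun f => ¬ Irreducible f)).card
      = Fintype.card (Sym2 F) := by
    rw [← image_sym2map, Finset.card_image_of_injective _ sym2map_injective, Finset.card_univ]
  have hsym : 2 * Fintype.card (Sym2 F) = Fintype.card F ^ 2 + Fintype.card F := by
    rw [Sym2.card, Nat.choose_two_right, Nat.add_sub_cancel]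
    have heven : Even ((Fintype.card F + 1) * Fintype.card F) := by
      rw [mul_comm]; exact Nat.even_mul_succ_self _
    obtain ⟨k, hk⟩ := heven
    rw [hk]
    have : (k + k) / 2 = k := by omega
    rw [this]
    nlinarith [hk]
  rw [hred] at hsplit
  rw [irred2]
  set Q := Fintype.card F ^ 2 with hQ
  omega


-- ### summation lemmas
variable {d : ℕ}

local notation "q" => (Fintype.card F : ℤ)

lemma sum_cnt_prod_diag (d : ℕ) (a : F) :
    ∑ f ∈ monicFinset F d,
        (((normalizedFactors f).count (X - C a) : ℤ) * ((normalizedFactors f).count (X - C a) : ℤ))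
      = Dz d q := by
  have key : ∀ f ∈ monicFinset F d,
      (((normalizedFactors f).count (X - C a) : ℤ) * ((normalizedFactors f).count (X - C a) : ℤ))
        = ∑ i ∈ Finset.Icc 1 d, ∑ j ∈ Finset.Icc 1 d,
            (if (X - C a) ^ (max i j) ∣ f then (1 : ℤ) else 0) := by
    intro f hf
    rw [cnt_eq_sum_ind (irreducible_X_sub_C a) (monic_X_sub_C a) hf, Finset.sum_mul_sum]
    apply Finset.sum_congr rfl; intro i _
    apply Finset.sum_congr rfl; intro j _
    rw [ite_zero_mul_ite_zero, one_mul]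
    congr 1
    simp only [eq_iff_iff]
    constructor
    · rintro ⟨h1, h2⟩
      rcases max_cases i j with ⟨hm, _⟩ | ⟨hm, _⟩ <;> rw [hm] <;> assumption
    · intro hmax
      exact ⟨(pow_dvd_pow _ (le_max_left i j)).trans hmax,
        (pow_dvd_pow _ (le_max_right i j)).trans hmax⟩
  rw [Finset.sum_congr rfl key, Finset.sum_comm]
  rw [Dz]
  apply Finset.sum_congr rfl; intro i hi
  rw [Finset.sum_comm]
  apply Finset.sum_congr rfl; intro j hj
  simp only [Finset.mem_Icc] at hi hj
  rw [sum_ind_dvd d ((monic_X_sub_C a).pow _)]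
  rw [natDegree_pow, natDegree_X_sub_C, mul_one, if_pos (by omega)]

lemma sum_cnt_prod_off (d : ℕ) {a b : F} (hab : a ≠ b) :
    ∑ f ∈ monicFinset F d,
        (((normalizedFactors f).count (X - C a) : ℤ) * ((normalizedFactors f).count (X - C b) : ℤ))
      = Oz d q := by
  have hcop : IsCoprime (X - C a) (X - C b) :=
    isCoprime_X_sub_C_of_isUnit_sub ((sub_ne_zero_of_ne hab).isUnit)
  have key : ∀ f ∈ monicFinset F d,
      (((normalizedFactors f).count (X - C a) : ℤ) * ((normalizedFactors f).count (X - C b) : ℤ))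
        = ∑ i ∈ Finset.Icc 1 d, ∑ j ∈ Finset.Icc 1 d,
            (if (X - C a) ^ i * (X - C b) ^ j ∣ f then (1 : ℤ) else 0) := by
    intro f hf
    rw [cnt_eq_sum_ind (irreducible_X_sub_C a) (monic_X_sub_C a) hf,
      cnt_eq_sum_ind (irreducible_X_sub_C b) (monic_X_sub_C b) hf, Finset.sum_mul_sum]
    apply Finset.sum_congr rfl; intro i _
    apply Finset.sum_congr rfl; intro j _
    rw [ite_zero_mul_ite_zero, one_mul]
    congr 1
    simp only [eq_iff_iff]
    constructor
    · rintro ⟨h1, h2⟩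
      exact (hcop.pow).mul_dvd h1 h2
    · intro hm
      exact ⟨(dvd_mul_right _ _).trans hm, (dvd_mul_left _ _).trans hm⟩
  rw [Finset.sum_congr rfl key, Finset.sum_comm]
  rw [Oz]
  apply Finset.sum_congr rfl; intro i hi
  rw [Finset.sum_comm]
  apply Finset.sum_congr rfl; intro j hj
  simp only [Finset.mem_Icc] at hi hj
  rw [sum_ind_dvd d (((monic_X_sub_C a).pow i).mul ((monic_X_sub_C b).pow j))]
  rw [((monic_X_sub_C a).pow i).natDegree_mul ((monic_X_sub_C b).pow j),
    natDegree_pow, natDegree_pow, natDegree_X_sub_C, natDegree_X_sub_C, mul_one, mul_one]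

lemma sum_fc1 (d : ℕ) :
    ∑ f ∈ monicFinset F d, (factorCount 1 f : ℤ) = q * E1z d q := by
  have key : ∀ f ∈ monicFinset F d, (factorCount 1 f : ℤ)
      = ∑ a : F, ((normalizedFactors f).count (X - C a) : ℤ) := by
    intro f hf
    have hf0 : f ≠ 0 := ((mem_monicFinset.1 hf).1).ne_zero
    rw [factorCount_one f hf0]
    push_cast
    rfl
  rw [Finset.sum_congr rfl key, Finset.sum_comm]
  have key2 : ∀ a : F, ∑ f ∈ monicFinset F d, ((normalizedFactors f).count (X - C a) : ℤ)
      = E1z d q := by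
    intro a
    rw [Finset.sum_congr rfl
      (fun f hf => cnt_eq_sum_ind (irreducible_X_sub_C a) (monic_X_sub_C a) hf),
      Finset.sum_comm, E1z]
    apply Finset.sum_congr rfl; intro i hi
    simp only [Finset.mem_Icc] at hi
    rw [sum_ind_dvd d ((monic_X_sub_C a).pow _), natDegree_pow, natDegree_X_sub_C, mul_one,
      if_pos (by omega)]
  rw [Finset.sum_congr rfl (fun a _ => key2 a), Finset.sum_const, Finset.card_univ]
  simp [mul_comm]

lemma sum_fc1_sq (d : ℕ) :
    ∑ f ∈ monicFinset F d, (factorCount 1 f : ℤ) ^ 2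
      = q * Dz d q + (q ^ 2 - q) * Oz d q := by
  have key : ∀ f ∈ monicFinset F d, (factorCount 1 f : ℤ) ^ 2
      = ∑ a : F, ∑ b : F,
          (((normalizedFactors f).count (X - C a) : ℤ) * ((normalizedFactors f).count (X - C b) : ℤ)) := by
    intro f hf
    have hf0 : f ≠ 0 := ((mem_monicFinset.1 hf).1).ne_zero
    have h1 : (factorCount 1 f : ℤ) = ∑ a : F, ((normalizedFactors f).count (X - C a) : ℤ) := by
      rw [factorCount_one f hf0]; push_cast; rfl
    rw [h1, sq, Finset.sum_mul_sum]
  rw [Finset.sum_congr rfl key, Finset.sum_comm]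
  have key2 : ∀ a : F,
      (∑ f ∈ monicFinset F d, ∑ b : F,
        (((normalizedFactors f).count (X - C a) : ℤ) * ((normalizedFactors f).count (X - C b) : ℤ)))
      = Dz d q + ((q : ℤ) - 1) * Oz d q := by
    intro a
    rw [Finset.sum_comm]
    rw [← Finset.add_sum_erase _ _ (Finset.mem_univ a)]
    rw [sum_cnt_prod_diag d a]
    congr 1
    rw [Finset.sum_congr rfl (fun b hb => sum_cnt_prod_off d
      (fun h => (Finset.mem_erase.1 hb).1 h.symm)), Finset.sum_const, Finset.card_erase_of_mem
      (Finset.mem_univ a), Finset.card_univ]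
    have h1 : 1 ≤ Fintype.card F := Fintype.card_pos
    rw [nsmul_eq_mul]
    push_cast [Nat.cast_sub h1]
    ring
  rw [Finset.sum_congr rfl (fun a _ => key2 a), Finset.sum_const, Finset.card_univ, nsmul_eq_mul]
  ring

lemma sum_fc2 (d : ℕ) :
    2 * ∑ f ∈ monicFinset F d, (factorCount 2 f : ℤ) = (q ^ 2 - q) * Bz d q := by
  have key : ∀ f ∈ monicFinset F d, (factorCount 2 f : ℤ)
      = ∑ g ∈ irred2 F, ((normalizedFactors f).count g : ℤ) := by
    intro f hf
    have hf0 : f ≠ 0 := ((mem_monicFinset.1 hf).1).ne_zero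
    rw [factorCount_two f hf0]
    push_cast
    rfl
  rw [Finset.sum_congr rfl key, Finset.sum_comm]
  have key2 : ∀ g ∈ irred2 F,
      (∑ f ∈ monicFinset F d, ((normalizedFactors f).count g : ℤ)) = Bz d q := by
    intro g hg
    rw [irred2, Finset.mem_filter, mem_monicFinset] at hg
    rw [Finset.sum_congr rfl (fun f hf => cnt_eq_sum_ind hg.2 hg.1.1 hf), Finset.sum_comm, Bz]
    apply Finset.sum_congr rfl; intro i hi
    rw [sum_ind_dvd d (hg.1.1.pow i), natDegree_pow, hg.1.2]
    rw [show i * 2 = 2 * i by ring]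
  rw [Finset.sum_congr rfl key2, Finset.sum_const, nsmul_eq_mul, ← mul_assoc]
  have h2 := two_mul_card_irred2 (F := F)
  have h3 : (2 : ℤ) * ((irred2 F).card : ℤ) = q ^ 2 - q := by
    have := congrArg (fun n : ℕ => (n : ℤ)) h2
    push_cast at this
    linarith
  rw [h3]

lemma two_mul_choose_two (m : ℕ) : 2 * (m.choose 2 : ℤ) = (m : ℤ) ^ 2 - m := by
  induction m with
  | zero => simp
  | succ m ih =>
      rw [Nat.choose_succ_succ, Nat.choose_one_right]
      push_cast
      push_cast at ih
      ring_nf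
      ring_nf at ih
      linarith

end QEaux

/-- For `d ≥ 2` there is a polynomial `p ∈ ℤ[X]` with nonnegative coefficients,
`p(0) = 0` and `deg p ≤ d`, such that `∑_{f monic, deg f = d} Q(f) = p(q)` for every
finite field `F_q`, and `p(1) = binomial(d, 2)`. -/
theorem statement10 (d : ℕ) (hd : 2 ≤ d) :
    ∃ p : Polynomial ℤ, (∀ i, 0 ≤ p.coeff i) ∧ p.eval 0 = 0 ∧ p.natDegree ≤ d ∧
      (∀ (F : Type) [Field F] [Fintype F],
        ∑ᶠ f ∈ {f : F[X] | f.Monic ∧ f.natDegree = d}, quadExcess f =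
          p.eval (Fintype.card F : ℤ)) ∧
      p.eval 1 = (d.choose 2 : ℤ) := by
  classical
  refine ⟨QEaux.pAux (d - 2), QEaux.pAux_coeff_nonneg _, QEaux.pAux_eval_zero _, ?_, ?_, ?_⟩
  · have := QEaux.pAux_natDegree (d - 2); omega
  · intro F _ _
    have hset : {f : F[X] | f.Monic ∧ f.natDegree = d} = ↑(QEaux.monicFinset F d) := by
      ext f
      simp [QEaux.mem_monicFinset]
    rw [hset, finsum_mem_coe_finset]
    have halg := QEaux.pAux_alg (d - 2) (Fintype.card F : ℤ)
    rw [show d - 2 + 2 = d by omega] at halg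
    have hptwise : ∀ f ∈ QEaux.monicFinset F d, 2 * quadExcess f
        = ((factorCount 1 f : ℤ) ^ 2 - (factorCount 1 f : ℤ)) - 2 * (factorCount 2 f : ℤ) := by
      intro f _
      rw [quadExcess]
      have h2 := QEaux.two_mul_choose_two (factorCount 1 f)
      linarith
    have hmain : 2 * ∑ f ∈ QEaux.monicFinset F d, quadExcess f
        = (Fintype.card F : ℤ) * QEaux.Dz d (Fintype.card F : ℤ)
          + ((Fintype.card F : ℤ) ^ 2 - (Fintype.card F : ℤ)) * QEaux.Oz d (Fintype.card F : ℤ)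
          - (Fintype.card F : ℤ) * QEaux.E1z d (Fintype.card F : ℤ)
          - ((Fintype.card F : ℤ) ^ 2 - (Fintype.card F : ℤ)) * QEaux.Bz d (Fintype.card F : ℤ) := by
      rw [Finset.mul_sum, Finset.sum_congr rfl hptwise]
      rw [Finset.sum_sub_distrib, Finset.sum_sub_distrib]
      rw [← Finset.mul_sum]
      rw [QEaux.sum_fc2 d, QEaux.sum_fc1 (F := F) d, QEaux.sum_fc1_sq (F := F) d]
    linarith [hmain.trans halg.symm]
  · have h := QEaux.pAux_eval_one (d - 2)
    rw [show d - 2 + 2 = d by omega] at h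
    exact h
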